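/- Let λ ∈ (0,1] and let ρ = (ρ₁, ..., ρ_M) be a vector of strictly positive reals summing to 1 with max_i ρ_i < λ/(1+λ). Define, for S ⊆ {1,...,M}, π₀(S) = Σ_{i∈S} ρ_i and π₁(S) = 1 - π₀(S), and the objective f(S) = λ(π₁(S) - λπ₀(S)) if π₁(S) ≥ λπ₀(S), and f(S) = λπ₀(S) - π₁(S) otherwise. Then any minimizer S₀* of f over all subsets of {1,...,M} satisfies -min_{i∉S₀*} ρ_i ≤ λπ₀(S₀*) - π₁(S₀*) ≤ λ·min_{i∈S₀*} ρ_i, where the minimum over an empty set is taken as +∞ (so the corresponding constraint is vacuous). -/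
import Mathlib


open Finset

/-- Any minimizer of the weighted-difference objective satisfies the SED condition. -/
theorem sed_minimizer_satisfies_sed_condition
    (M : ℕ) (lam : ℝ) (hlam : 0 < lam) (hlam' : lam ≤ 1)
    (ρ : Fin M → ℝ) (hpos : ∀ i, 0 < ρ i)
    (hsum : ∑ i, ρ i = 1)
    (hmax : ∀ i, ρ i < lam / (1 + lam))
    (f : Finset (Fin M) → ℝ)
    (hf : ∀ S : Finset (Fin M),
      f S = if (1 - ∑ i ∈ S, ρ i) ≥ lam * ∑ i ∈ S, ρ i
        then lam * ((1 - ∑ i ∈ S, ρ i) - lam * ∑ i ∈ S, ρ i)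
        else lam * ∑ i ∈ S, ρ i - (1 - ∑ i ∈ S, ρ i))
    (S₀ : Finset (Fin M)) (hmin : ∀ S : Finset (Fin M), f S₀ ≤ f S) :
    (∀ hne : S₀ᶜ.Nonempty,
        -(S₀ᶜ.inf' hne ρ) ≤ lam * (∑ i ∈ S₀, ρ i) - (1 - ∑ i ∈ S₀, ρ i))
    ∧ (∀ hne : S₀.Nonempty,
        lam * (∑ i ∈ S₀, ρ i) - (1 - ∑ i ∈ S₀, ρ i) ≤ lam * S₀.inf' hne ρ) := by
  constructor
  · intro hne
    obtain ⟨j, hj, hjeq⟩ := S₀ᶜ.exists_mem_eq_inf' hne ρ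
    rw [hjeq]
    by_contra h
    push_neg at h
    have hjS : j ∉ S₀ := by simpa using hj
    have hq : ∑ i ∈ insert j S₀, ρ i = ρ j + ∑ i ∈ S₀, ρ i := Finset.sum_insert hjS
    have hρj := hpos j
    have hmj := hmin (insert j S₀)
    rw [hf S₀, hf (insert j S₀), hq] at hmj
    split_ifs at hmj <;> nlinarith [hmj, h, hρj, hlam, mul_pos hlam hρj, mul_pos (mul_pos hlam hlam) hρj]
  · intro hne
    obtain ⟨j, hj, hjeq⟩ := S₀.exists_mem_eq_inf' hne ρ
    rw [hjeq]
    by_contra h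
    push_neg at h
    have hq : ∑ i ∈ S₀.erase j, ρ i = (∑ i ∈ S₀, ρ i) - ρ j := by
      have := Finset.sum_erase_add S₀ ρ hj
      linarith
    have hρj := hpos j
    have hmj := hmin (S₀.erase j)
    rw [hf S₀, hf (S₀.erase j), hq] at hmj
    split_ifs at hmj <;> nlinarith [hmj, h, hρj, hlam, mul_pos hlam hρj]
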